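/- Let f : ℝ → ℝ be periodic with period 1, piecewise-linear and injective on [0,1), and suppose f has pieces f₁, …, f_k defined on subintervals I₁, …, I_k of [0,1), where f_j(x) = m_j x + c_j and |m₁| = |m₂| = ⋯ = |m_k| = m. Then for all α ∈ ℝ and N ∈ ℕ, the union over all pieces of the sets of interior gap lengths has at most three elements. In particular, every interior gap length equals m·v for one of the at most three gap values v of the set {frac(dα) : 1 ≤ d ≤ N} on the circle. -/

import Mathlib

section helper

lemma three_gap_core (α : ℝ) (N dP dQ u w : ℕ) (P Q A B : ℝ)
    (hdP1 : 1 ≤ dP) (hdPN : dP ≤ N) (hdQ1 : 1 ≤ dQ) (hdQN : dQ ≤ N)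
    (hu1 : 1 ≤ u) (huN : u ≤ N) (hw1 : 1 ≤ w) (hwN : w ≤ N)
    (hP : Int.fract ((dP:ℝ)*α) = P) (hQ : Int.fract ((dQ:ℝ)*α) = Q) (hPQ : P < Q)
    (hA : Int.fract ((u:ℝ)*α) = A) (hApos : 0 < A)
    (hAmin : ∀ e : ℕ, 1 ≤ e → e ≤ N → 0 < Int.fract ((e:ℝ)*α) → A ≤ Int.fract ((e:ℝ)*α))
    (hB : Int.fract ((w:ℝ)*α) = B)
    (hBmax : ∀ e : ℕ, 1 ≤ e → e ≤ N → Int.fract ((e:ℝ)*α) ≤ B)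
    (hgap : ∀ e : ℕ, 1 ≤ e → e ≤ N →
      ¬ (P < Int.fract ((e:ℝ)*α) ∧ Int.fract ((e:ℝ)*α) < Q)) :
    Q - P = A ∨ Q - P = 1 - B ∨ Q - P = A + (1 - B) := by
  have hP0 : 0 ≤ P := hP ▸ Int.fract_nonneg _
  have hQ1 : Q < 1 := hQ ▸ Int.fract_lt_one _
  have hg0 : 0 < Q - P := by linarith
  have hP' : (dP:ℝ)*α - (⌊(dP:ℝ)*α⌋ : ℝ) = P := by rw [← hP]; rw [Int.fract]
  have hQ' : (dQ:ℝ)*α - (⌊(dQ:ℝ)*α⌋ : ℝ) = Q := by rw [← hQ]; rw [Int.fract]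
  have hA' : (u:ℝ)*α - (⌊(u:ℝ)*α⌋ : ℝ) = A := by rw [← hA]; rw [Int.fract]
  have hB' : (w:ℝ)*α - (⌊(w:ℝ)*α⌋ : ℝ) = B := by rw [← hB]; rw [Int.fract]
  have hBQ : Q ≤ B := hQ ▸ hBmax dQ hdQ1 hdQN
  have hB1 : B < 1 := hB ▸ Int.fract_lt_one _
  -- Claim 1
  have claim1 : A < Q - P → N + 1 ≤ dP + u := by
    intro hAg
    by_contra h
    push_neg at h
    have hle : dP + u ≤ N := by omega
    have hv : Int.fract ((↑(dP+u):ℝ)*α) = P + A := by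
      rw [Int.fract_eq_iff]
      refine ⟨by linarith, by linarith, ⟨⌊(dP:ℝ)*α⌋ + ⌊(u:ℝ)*α⌋, ?_⟩⟩
      push_cast
      linarith
    exact hgap (dP+u) (by omega) hle ⟨by rw [hv]; linarith, by rw [hv]; linarith⟩
  -- Claim 2
  have claim2 : 1 - B < Q - P → N + 1 ≤ dQ + w := by
    intro hCg
    by_contra h
    push_neg at h
    have hle : dQ + w ≤ N := by omega
    have hv : Int.fract ((↑(dQ+w):ℝ)*α) = Q + B - 1 := by
      rw [Int.fract_eq_iff]
      refine ⟨by linarith, by linarith, ⟨⌊(dQ:ℝ)*α⌋ + ⌊(w:ℝ)*α⌋ + 1, ?_⟩⟩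
      push_cast
      linarith
    exact hgap (dQ+w) (by omega) hle ⟨by rw [hv]; linarith, by rw [hv]; linarith⟩
  -- final block
  have final : N + 1 ≤ dP + u → N + 1 ≤ dQ + w → A + (1 - B) ≤ Q - P →
      Q - P = A + (1 - B) := by
    intro h1 h2 hle
    by_contra hne
    have hlt : A + (1 - B) < Q - P := lt_of_le_of_ne hle (fun h => hne h.symm)
    have he1 : 1 ≤ dP + u - w := by omega
    have he2 : 1 ≤ dQ + w - u := by omega
    rcases (show dP + u - w ≤ N ∨ dQ + w - u ≤ N by omega) with hc | hc
    · have hcast : ((dP + u - w : ℕ) : ℝ) = (dP:ℝ) + u - w := by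
        push_cast [Nat.cast_sub (show w ≤ dP + u by omega)]
        ring
      have hv : Int.fract ((↑(dP+u-w):ℝ)*α) = P + A + (1 - B) := by
        rw [Int.fract_eq_iff]
        refine ⟨by linarith, by linarith, ⟨⌊(dP:ℝ)*α⌋ + ⌊(u:ℝ)*α⌋ - ⌊(w:ℝ)*α⌋ - 1, ?_⟩⟩
        rw [hcast]
        push_cast
        linarith
      exact hgap _ he1 hc ⟨by rw [hv]; linarith, by rw [hv]; linarith⟩
    · have hcast : ((dQ + w - u : ℕ) : ℝ) = (dQ:ℝ) + w - u := by
        push_cast [Nat.cast_sub (show u ≤ dQ + w by omega)]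
        ring
      have hv : Int.fract ((↑(dQ+w-u):ℝ)*α) = Q - A - (1 - B) := by
        rw [Int.fract_eq_iff]
        refine ⟨by linarith, by linarith, ⟨⌊(dQ:ℝ)*α⌋ + ⌊(w:ℝ)*α⌋ - ⌊(u:ℝ)*α⌋ + 1, ?_⟩⟩
        rw [hcast]
        push_cast
        linarith
      exact hgap _ he2 hc ⟨by rw [hv]; linarith, by rw [hv]; linarith⟩
  rcases lt_trichotomy dP dQ with hdd | hdd | hdd
  · -- dP < dQ
    have hncast : ((dQ - dP : ℕ) : ℝ) = (dQ:ℝ) - dP := by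
      push_cast [Nat.cast_sub hdd.le]; ring
    have hn : Int.fract ((↑(dQ-dP):ℕ) * α : ℝ) = Q - P := by
      rw [Int.fract_eq_iff]
      refine ⟨by linarith, by linarith, ⟨⌊(dQ:ℝ)*α⌋ - ⌊(dP:ℝ)*α⌋, ?_⟩⟩
      rw [hncast]; push_cast; linarith
    have hAle : A ≤ Q - P := by
      have := hAmin (dQ - dP) (by omega) (by omega) (by rw [hn]; linarith)
      rw [hn] at this; exact this
    rcases eq_or_lt_of_le hAle with he | he
    · exact Or.inl he.symm
    · have h1 := claim1 he
      have hecast : ((dP + u - dQ : ℕ) : ℝ) = (dP:ℝ) + u - dQ := by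
        push_cast [Nat.cast_sub (show dQ ≤ dP + u by omega)]; ring
      have hv : Int.fract ((↑(dP+u-dQ):ℝ)*α) = A - (Q - P) + 1 := by
        rw [Int.fract_eq_iff]
        refine ⟨by linarith, by linarith, ⟨⌊(dP:ℝ)*α⌋ + ⌊(u:ℝ)*α⌋ - ⌊(dQ:ℝ)*α⌋ - 1, ?_⟩⟩
        rw [hecast]; push_cast; linarith
      have hBe := hBmax (dP + u - dQ) (by omega) (by omega)
      rw [hv] at hBe
      -- A + (1-B) ≤ Q - P
      have hle : A + (1 - B) ≤ Q - P := by linarith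
      have h2 := claim2 (by linarith)
      exact Or.inr (Or.inr (final h1 h2 hle))
  · exfalso
    subst hdd
    rw [hP] at hQ
    linarith [hQ]
  · -- dQ < dP
    have hncast : ((dP - dQ : ℕ) : ℝ) = (dP:ℝ) - dQ := by
      push_cast [Nat.cast_sub hdd.le]; ring
    have hn : Int.fract ((↑(dP-dQ):ℕ) * α : ℝ) = 1 - (Q - P) := by
      rw [Int.fract_eq_iff]
      refine ⟨by linarith, by linarith, ⟨⌊(dP:ℝ)*α⌋ - ⌊(dQ:ℝ)*α⌋ - 1, ?_⟩⟩
      rw [hncast]; push_cast; linarith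
    have hCle : 1 - B ≤ Q - P := by
      have := hBmax (dP - dQ) (by omega) (by omega)
      rw [hn] at this; linarith
    rcases eq_or_lt_of_le hCle with he | he
    · exact Or.inr (Or.inl he.symm)
    · have h2 := claim2 he
      have hecast : ((dQ + w - dP : ℕ) : ℝ) = (dQ:ℝ) + w - dP := by
        push_cast [Nat.cast_sub (show dP ≤ dQ + w by omega)]; ring
      have hv : Int.fract ((↑(dQ+w-dP):ℝ)*α) = (Q - P) - (1 - B) := by
        rw [Int.fract_eq_iff]
        refine ⟨by linarith, by linarith, ⟨⌊(dQ:ℝ)*α⌋ + ⌊(w:ℝ)*α⌋ - ⌊(dP:ℝ)*α⌋ + 1, ?_⟩⟩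
        rw [hecast]; push_cast; linarith
      have hAe := hAmin (dQ + w - dP) (by omega) (by omega) (by rw [hv]; linarith)
      rw [hv] at hAe
      have hle : A + (1 - B) ≤ Q - P := by linarith
      have h1 := claim1 (by linarith)
      exact Or.inr (Or.inr (final h1 h2 hle))

end helper

/-- The set of distinct values `f (d*α + β)` for `1 ≤ d ≤ N`. -/
def orbitSet (f : ℝ → ℝ) (α β : ℝ) (N : ℕ) : Set ℝ :=
  {y | ∃ d : ℕ, 1 ≤ d ∧ d ≤ N ∧ y = f (d * α + β)}

/-- Gaps between consecutive (nearest-neighbor) elements of a set of reals. -/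
def consGaps (S : Set ℝ) : Set ℝ :=
  {g | ∃ a ∈ S, ∃ b ∈ S, a < b ∧ (∀ x ∈ S, x ≤ a ∨ b ≤ x) ∧ g = b - a}

/-- The gap length set `G_{f,α,β,N}`: consecutive gaps together with the
extremal gap `s₁ - inf f + sup f - s_n`. -/
def gapSet (f : ℝ → ℝ) (α β : ℝ) (N : ℕ) : Set ℝ :=
  consGaps (orbitSet f α β N) ∪
    {sInf (orbitSet f α β N) - sInf (Set.range f) + sSup (Set.range f) -
      sSup (orbitSet f α β N)}

/-- For a piecewise-linear 1-periodic function, injective on `[0,1)`, whose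
pieces all have slopes of the same magnitude, the union of the sets of
interior gap lengths of the pieces has at most three elements. -/
theorem interior_gaps_le_three (f : ℝ → ℝ)
    (hper : ∀ x, f (x + 1) = f x)
    (hinj : Set.InjOn f (Set.Ico 0 1))
    (k : ℕ) (hk : 0 < k) (a b m c : ℕ → ℝ) (mm : ℝ)
    (hsub : ∀ j < k, 0 ≤ a j ∧ a j < b j ∧ b j ≤ 1)
    (hpiece : ∀ j < k, ∀ x ∈ Set.Ico (a j) (b j), f x = m j * x + c j)
    (hslope : ∀ j < k, |m j| = mm)
    (α : ℝ) (N : ℕ) :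
    {g : ℝ | ∃ j < k, ∃ d d' : ℕ, 1 ≤ d ∧ d ≤ N ∧ 1 ≤ d' ∧ d' ≤ N ∧
      Int.fract (d * α) ∈ Set.Ico (a j) (b j) ∧
      Int.fract (d' * α) ∈ Set.Ico (a j) (b j) ∧
      f (d * α) < f (d' * α) ∧
      (∀ e : ℕ, 1 ≤ e → e ≤ N → f (e * α) ≤ f (d * α) ∨ f (d' * α) ≤ f (e * α)) ∧
      g = f (d' * α) - f (d * α)}.ncard ≤ 3 := by
  classical
  -- periodicity under integer translations
  have hperZ : ∀ (x : ℝ) (n : ℤ), f (x + n) = f x := by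
    intro x n
    induction n using Int.induction_on with
    | zero => simp
    | succ i ih =>
        have h1 : (x + (i:ℝ)) + 1 = x + ((i:ℤ)+1 : ℤ) := by push_cast; ring
        rw [← ih, ← hper (x + (i:ℤ))]
        norm_num [h1]
    | pred i ih =>
        have h1 : (x + (-(i:ℤ)-1 : ℤ)) + 1 = x + (-(i:ℤ) : ℤ) := by push_cast; ring
        have := hper (x + (-(i:ℤ)-1 : ℤ))
        rw [h1] at this
        rw [← this]
        exact ih
  have hfract : ∀ x : ℝ, f x = f (Int.fract x) := by
    intro x
    have : f (Int.fract x + (⌊x⌋ : ℤ)) = f (Int.fract x) := hperZ _ _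
    rw [← this, Int.fract]
    ring_nf
  set SA : Set ℝ := {x : ℝ | 0 < x ∧ ∃ e : ℕ, 1 ≤ e ∧ e ≤ N ∧ Int.fract ((e:ℝ)*α) = x}
    with hSA
  set SB : Set ℝ := {x : ℝ | ∃ e : ℕ, 1 ≤ e ∧ e ≤ N ∧ Int.fract ((e:ℝ)*α) = x} with hSB
  have hfinB : SB.Finite := by
    have : SB ⊆ (fun e : ℕ => Int.fract ((e:ℝ)*α)) '' (Set.Icc 1 N) := by
      rintro x ⟨e, he1, heN, rfl⟩
      exact ⟨e, ⟨he1, heN⟩, rfl⟩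
    exact (((Set.finite_Icc 1 N).image _)).subset this
  have hfinA : SA.Finite := hfinB.subset (fun x hx => hx.2)
  set A : ℝ := sInf SA with hAdef
  set B : ℝ := sSup SB with hBdef
  have hsubset : {g : ℝ | ∃ j < k, ∃ d d' : ℕ, 1 ≤ d ∧ d ≤ N ∧ 1 ≤ d' ∧ d' ≤ N ∧
      Int.fract (d * α) ∈ Set.Ico (a j) (b j) ∧
      Int.fract (d' * α) ∈ Set.Ico (a j) (b j) ∧
      f (d * α) < f (d' * α) ∧
      (∀ e : ℕ, 1 ≤ e → e ≤ N → f (e * α) ≤ f (d * α) ∨ f (d' * α) ≤ f (e * α)) ∧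
      g = f (d' * α) - f (d * α)} ⊆ {mm * A, mm * (1 - B), mm * (A + (1 - B))} := by
    rintro g ⟨j, hj, d, d', hd1, hdN, hd'1, hd'N, hdI, hd'I, hflt, hadj, rfl⟩
    have hfd : f ((d:ℝ) * α) = m j * Int.fract ((d:ℝ)*α) + c j := by
      rw [hfract ((d:ℝ)*α)]
      exact hpiece j hj _ hdI
    have hfd' : f ((d':ℝ) * α) = m j * Int.fract ((d':ℝ)*α) + c j := by
      rw [hfract ((d':ℝ)*α)]
      exact hpiece j hj _ hd'I
    have key : ∀ dP dQ : ℕ, 1 ≤ dP → dP ≤ N → 1 ≤ dQ → dQ ≤ N →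
        Int.fract ((dP:ℝ)*α) < Int.fract ((dQ:ℝ)*α) →
        Int.fract ((dP:ℝ)*α) ∈ Set.Ico (a j) (b j) →
        Int.fract ((dQ:ℝ)*α) ∈ Set.Ico (a j) (b j) →
        f ((d':ℝ) * α) - f ((d:ℝ) * α)
          = mm * (Int.fract ((dQ:ℝ)*α) - Int.fract ((dP:ℝ)*α)) →
        (∀ e : ℕ, 1 ≤ e → e ≤ N →
          ¬ (Int.fract ((dP:ℝ)*α) < Int.fract ((e:ℝ)*α) ∧
             Int.fract ((e:ℝ)*α) < Int.fract ((dQ:ℝ)*α))) →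
        f ((d':ℝ) * α) - f ((d:ℝ) * α)
          ∈ ({mm * A, mm * (1 - B), mm * (A + (1 - B))} : Set ℝ) := by
      intro dP dQ hdP1 hdPN hdQ1 hdQN hPQ hPI hQI hgval hgap
      set P := Int.fract ((dP:ℝ)*α) with hPdef
      set Q := Int.fract ((dQ:ℝ)*α) with hQdef
      have hQpos : 0 < Q := lt_of_le_of_lt (Int.fract_nonneg _) hPQ
      have hBne : SB.Nonempty := ⟨Q, dQ, hdQ1, hdQN, rfl⟩
      have hAne : SA.Nonempty := ⟨Q, hQpos, dQ, hdQ1, hdQN, rfl⟩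
      have hAmem : A ∈ SA := Set.Nonempty.csInf_mem hAne hfinA
      have hBmem : B ∈ SB := Set.Nonempty.csSup_mem hBne hfinB
      obtain ⟨hApos, u, hu1, huN, hu⟩ := hAmem
      obtain ⟨w, hw1, hwN, hw⟩ := hBmem
      have hAmin : ∀ e : ℕ, 1 ≤ e → e ≤ N → 0 < Int.fract ((e:ℝ)*α) →
          A ≤ Int.fract ((e:ℝ)*α) := by
        intro e he1 heN hpos
        exact csInf_le hfinA.bddBelow ⟨hpos, e, he1, heN, rfl⟩
      have hBmax : ∀ e : ℕ, 1 ≤ e → e ≤ N → Int.fract ((e:ℝ)*α) ≤ B := by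
        intro e he1 heN
        exact le_csSup hfinB.bddAbove ⟨e, he1, heN, rfl⟩
      have := three_gap_core α N dP dQ u w P Q A B hdP1 hdPN hdQ1 hdQN hu1 huN
        hw1 hwN rfl rfl hPQ hu hApos hAmin hw hBmax hgap
      rcases this with h | h | h
      · left; rw [hgval, h]
      · right; left; rw [hgval, h]
      · right; right; rw [hgval, h]; rfl
    -- orientation
    have hmm : |m j| = mm := hslope j hj
    rcases lt_trichotomy (Int.fract ((d:ℝ)*α)) (Int.fract ((d':ℝ)*α)) with hlt | heq | hgt
    · -- slope positive
      have hmpos : 0 < m j := by nlinarith [hflt, hfd, hfd']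
      have hgval : f ((d':ℝ) * α) - f ((d:ℝ) * α)
          = mm * (Int.fract ((d':ℝ)*α) - Int.fract ((d:ℝ)*α)) := by
        rw [hfd, hfd', ← hmm, abs_of_pos hmpos]; ring
      refine key d d' hd1 hdN hd'1 hd'N hlt hdI hd'I hgval ?_
      rintro e he1 heN ⟨hl, hr⟩
      have heI : Int.fract ((e:ℝ)*α) ∈ Set.Ico (a j) (b j) :=
        ⟨le_trans hdI.1 hl.le, lt_trans hr hd'I.2⟩
      have hfe : f ((e:ℝ) * α) = m j * Int.fract ((e:ℝ)*α) + c j := by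
        rw [hfract ((e:ℝ)*α)]; exact hpiece j hj _ heI
      rcases hadj e he1 heN with h | h
      · rw [hfe, hfd] at h; nlinarith
      · rw [hfe, hfd'] at h; nlinarith
    · exfalso
      rw [hfd, hfd', heq] at hflt
      linarith
    · -- slope negative
      have hmneg : m j < 0 := by nlinarith [hflt, hfd, hfd']
      have hgval : f ((d':ℝ) * α) - f ((d:ℝ) * α)
          = mm * (Int.fract ((d:ℝ)*α) - Int.fract ((d':ℝ)*α)) := by
        rw [hfd, hfd', ← hmm, abs_of_neg hmneg]; ring
      refine key d' d hd'1 hd'N hd1 hdN hgt hd'I hdI hgval ?_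
      rintro e he1 heN ⟨hl, hr⟩
      have heI : Int.fract ((e:ℝ)*α) ∈ Set.Ico (a j) (b j) :=
        ⟨le_trans hd'I.1 hl.le, lt_trans hr hdI.2⟩
      have hfe : f ((e:ℝ) * α) = m j * Int.fract ((e:ℝ)*α) + c j := by
        rw [hfract ((e:ℝ)*α)]; exact hpiece j hj _ heI
      rcases hadj e he1 heN with h | h
      · rw [hfe, hfd] at h; nlinarith
      · rw [hfe, hfd'] at h; nlinarith
  calc ({g : ℝ | ∃ j < k, ∃ d d' : ℕ, 1 ≤ d ∧ d ≤ N ∧ 1 ≤ d' ∧ d' ≤ N ∧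
      Int.fract (d * α) ∈ Set.Ico (a j) (b j) ∧
      Int.fract (d' * α) ∈ Set.Ico (a j) (b j) ∧
      f (d * α) < f (d' * α) ∧
      (∀ e : ℕ, 1 ≤ e → e ≤ N → f (e * α) ≤ f (d * α) ∨ f (d' * α) ≤ f (e * α)) ∧
      g = f (d' * α) - f (d * α)}).ncard
      ≤ ({mm * A, mm * (1 - B), mm * (A + (1 - B))} : Set ℝ).ncard :=
        Set.ncard_le_ncard hsubset (Set.toFinite _)
    _ ≤ 3 := by
        apply le_trans (Set.ncard_insert_le _ _)
        have := Set.ncard_insert_le (mm * (1 - B)) ({mm * (A + (1 - B))} : Set ℝ)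
        simp only [Set.ncard_singleton] at this ⊢
        omega
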